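/- arXiv:1901.04052 — 10 statements merged into one kernel-verified Lean document; each statement's English description precedes it below -/
import Mathlib

section
/- Let R = MvPolynomial (Fin m) ℂ, let F ∈ R, and let (A, B) with A ∈ Matrix (Fin q) (Fin p) R and B ∈ Matrix (Fin p) (Fin q) R be a matrix factorization of F, i.e. A * B = F • (1 : Matrix (Fin q) (Fin q) R) and B * A = F • (1 : Matrix (Fin p) (Fin p) R). Then every element f of the critical ideal I_crit := Ideal.span { pderiv i F | i : Fin m } acts null-homotopically on the matrix factorization: there exist matrices s ∈ Matrix (Fin q) (Fin p) R and t ∈ Matrix (Fin p) (Fin q) R such that f • (1 : Matrix (Fin p) (Fin p) R) = t * A + B * s and f • (1 : Matrix (Fin q) (Fin q) R) = s * B + A * t. -/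
open MvPolynomial

private lemma map_mul_pderiv {m a b c : ℕ} (i : Fin m)
    (M : Matrix (Fin a) (Fin b) (MvPolynomial (Fin m) ℂ))
    (N : Matrix (Fin b) (Fin c) (MvPolynomial (Fin m) ℂ)) :
    (M * N).map (pderiv i) = M.map (pderiv i) * N + M * N.map (pderiv i) := by
  ext j k
  simp only [Matrix.map_apply, Matrix.add_apply, Matrix.mul_apply, map_sum, pderiv_mul]
  rw [← Finset.sum_add_distrib]

private lemma map_smul_one_pderiv {m n : ℕ} (i : Fin m) (F : MvPolynomial (Fin m) ℂ) :
    ((F • (1 : Matrix (Fin n) (Fin n) (MvPolynomial (Fin m) ℂ))).map (pderiv i))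
      = (pderiv i F) • 1 := by
  ext j k
  simp only [Matrix.map_apply, Matrix.smul_apply, Matrix.one_apply, smul_eq_mul]
  by_cases h : j = k <;> simp [h]

theorem matrix_factorization_critical_ideal_null_homotopic
    (m p q : ℕ) (F : MvPolynomial (Fin m) ℂ)
    (A : Matrix (Fin q) (Fin p) (MvPolynomial (Fin m) ℂ))
    (B : Matrix (Fin p) (Fin q) (MvPolynomial (Fin m) ℂ))
    (hAB : A * B = F • (1 : Matrix (Fin q) (Fin q) (MvPolynomial (Fin m) ℂ)))
    (hBA : B * A = F • (1 : Matrix (Fin p) (Fin p) (MvPolynomial (Fin m) ℂ)))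
    (f : MvPolynomial (Fin m) ℂ)
    (hf : f ∈ Ideal.span {g : MvPolynomial (Fin m) ℂ | ∃ i : Fin m, pderiv i F = g}) :
    ∃ (s : Matrix (Fin q) (Fin p) (MvPolynomial (Fin m) ℂ))
      (t : Matrix (Fin p) (Fin q) (MvPolynomial (Fin m) ℂ)),
      f • (1 : Matrix (Fin p) (Fin p) (MvPolynomial (Fin m) ℂ)) = t * A + B * s ∧
      f • (1 : Matrix (Fin q) (Fin q) (MvPolynomial (Fin m) ℂ)) = s * B + A * t := by
  refine Submodule.span_induction ?_ ?_ ?_ ?_ hf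
  · rintro g ⟨i, rfl⟩
    refine ⟨A.map (pderiv i), B.map (pderiv i), ?_, ?_⟩
    · have := congrArg (Matrix.map · (pderiv i)) hBA
      simpa [map_mul_pderiv, map_smul_one_pderiv, add_comm] using this.symm
    · have := congrArg (Matrix.map · (pderiv i)) hAB
      simpa [map_mul_pderiv, map_smul_one_pderiv, add_comm] using this.symm
  · exact ⟨0, 0, by simp, by simp⟩
  · rintro x y - - ⟨s, t, h1, h2⟩ ⟨s', t', h1', h2'⟩
    refine ⟨s + s', t + t', ?_, ?_⟩
    · rw [add_smul, h1, h1', Matrix.add_mul, Matrix.mul_add]; abel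
    · rw [add_smul, h2, h2', Matrix.add_mul, Matrix.mul_add]; abel
  · rintro r x - ⟨s, t, h1, h2⟩
    refine ⟨r • s, r • t, ?_, ?_⟩
    · rw [smul_eq_mul, mul_smul, h1]
      simp [Matrix.smul_mul, Matrix.mul_smul, smul_add]
    · rw [smul_eq_mul, mul_smul, h2]
      simp [Matrix.smul_mul, Matrix.mul_smul, smul_add]
end

section
/- Let R be a commutative ring and f : Fin m → R such that the list [f 0, …, f (m−1)] is a regular sequence in R, and let F ∈ Ideal.span (Set.range f). Let Λ := ExteriorAlgebra R (Fin m → R), let Λ^k denote the k-th exterior-degree component of Λ (the submodule (LinearMap.range (ExteriorAlgebra.ι R))^k), and let d_K : Λ →ₗ[R] Λ be the Koszul differential given by left contraction with the linear functional φ_f (x) = ∑ i, f i * x i (so d_K maps Λ^k into Λ^(k−1)). Then there exists an R-linear map δ : Λ →ₗ[R] Λ such that for every k, δ maps Λ^k into the span of the components Λ^j with j > k and j − k odd, and (d_K + δ) ∘ (d_K + δ) = F • LinearMap.id. -/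
open ExteriorAlgebra

theorem koszul_complex_extends_to_matrix_factorization
    {R : Type*} [CommRing R] (m : ℕ) (f : Fin m → R)
    (hreg : RingTheory.Sequence.IsRegular R (List.ofFn f))
    (F : R) (hF : F ∈ Ideal.span (Set.range f)) :
    ∃ δ : ExteriorAlgebra R (Fin m → R) →ₗ[R] ExteriorAlgebra R (Fin m → R),
      (∀ (k : ℕ) (x : ExteriorAlgebra R (Fin m → R)),
          x ∈ (LinearMap.range (ι R : (Fin m → R) →ₗ[R] ExteriorAlgebra R (Fin m → R))) ^ k →
          δ x ∈ ⨆ (j : ℕ) (_ : k < j ∧ Odd (j - k)),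
            (LinearMap.range (ι R : (Fin m → R) →ₗ[R] ExteriorAlgebra R (Fin m → R))) ^ j) ∧
      (CliffordAlgebra.contractLeft (∑ i, f i • (LinearMap.proj i : (Fin m → R) →ₗ[R] R)) + δ) ∘ₗ
        (CliffordAlgebra.contractLeft (∑ i, f i • (LinearMap.proj i : (Fin m → R) →ₗ[R] R)) + δ)
        = F • LinearMap.id := by
  obtain ⟨c, hc⟩ := Ideal.mem_span_range_iff_exists_fun.mp hF
  set φ : Module.Dual R (Fin m → R) := ∑ i, f i • (LinearMap.proj i : (Fin m → R) →ₗ[R] R)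
  set v : Fin m → R := c
  refine ⟨LinearMap.mulLeft R (ι R v), ?_, ?_⟩
  · intro k x hx
    have h1 : (ι R v) * x ∈
        (LinearMap.range (ι R : (Fin m → R) →ₗ[R] ExteriorAlgebra R (Fin m → R))) ^ (k + 1) := by
      rw [pow_succ']
      exact Submodule.mul_mem_mul (LinearMap.mem_range_self _ _) hx
    refine Submodule.mem_iSup_of_mem (k + 1) ?_
    refine Submodule.mem_iSup_of_mem ⟨Nat.lt_succ_self k, by simp⟩ h1
  · refine LinearMap.ext fun x => ?_
    simp only [LinearMap.coe_comp, Function.comp_apply, LinearMap.add_apply, LinearMap.mulLeft_apply, map_add,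
      LinearMap.smul_apply, LinearMap.id_apply]
    rw [CliffordAlgebra.contractLeft_contractLeft, CliffordAlgebra.contractLeft_ι_mul]
    have hsq : ι R v * (ι R v * x) = 0 := by
      rw [← mul_assoc, ι_sq_zero, zero_mul]
    have hφv : φ v = F := by
      simp only [φ, LinearMap.sum_apply, LinearMap.smul_apply, LinearMap.proj_apply, smul_eq_mul]
      rw [← hc]
      exact Finset.sum_congr rfl fun i _ => mul_comm _ _
    rw [hsq, hφv]
    abel
end

section
/- Let R be a commutative ring, F₁, F₂ ∈ R, and let (A₁, B₁) with A₁ ∈ Matrix (Fin q₁) (Fin p₁) R, B₁ ∈ Matrix (Fin p₁) (Fin q₁) R be a matrix factorization of F₁, and (A₂, B₂) with A₂ ∈ Matrix (Fin q₂) (Fin p₂) R, B₂ ∈ Matrix (Fin p₂) (Fin q₂) R be a matrix factorization of F₂. Define the block matrices E := fromBlocks (A₁ ⊗ₖ 1) (−(1 ⊗ₖ B₂)) (1 ⊗ₖ A₂) (B₁ ⊗ₖ 1), a matrix with rows indexed by (Fin q₁ × Fin p₂) ⊕ (Fin p₁ × Fin q₂) and columns by (Fin p₁ × Fin p₂) ⊕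 (Fin q₁ × Fin q₂), and O := fromBlocks (B₁ ⊗ₖ 1) (1 ⊗ₖ B₂) (−(1 ⊗ₖ A₂)) (A₁ ⊗ₖ 1) with the transposed index types, where ⊗ₖ denotes the Kronecker product. Then O * E = (F₁ + F₂) • 1 and E * O = (F₁ + F₂) • 1; i.e. (E, O) is a matrix factorization of F₁ + F₂ (the tensor product of the two matrix factorizations). -/
open Matrix Kronecker

theorem tensor_product_of_matrix_factorizations
    {R : Type*} [CommRing R] (F₁ F₂ : R) (p₁ q₁ p₂ q₂ : ℕ)
    (A₁ : Matrix (Fin q₁) (Fin p₁) R) (B₁ : Matrix (Fin p₁) (Fin q₁) R)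
    (A₂ : Matrix (Fin q₂) (Fin p₂) R) (B₂ : Matrix (Fin p₂) (Fin q₂) R)
    (h₁ : A₁ * B₁ = F₁ • (1 : Matrix (Fin q₁) (Fin q₁) R))
    (h₁' : B₁ * A₁ = F₁ • (1 : Matrix (Fin p₁) (Fin p₁) R))
    (h₂ : A₂ * B₂ = F₂ • (1 : Matrix (Fin q₂) (Fin q₂) R))
    (h₂' : B₂ * A₂ = F₂ • (1 : Matrix (Fin p₂) (Fin p₂) R))
    (E : Matrix ((Fin q₁ × Fin p₂) ⊕ (Fin p₁ × Fin q₂)) ((Fin p₁ × Fin p₂) ⊕ (Fin q₁ × Fin q₂)) R)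
    (O : Matrix ((Fin p₁ × Fin p₂) ⊕ (Fin q₁ × Fin q₂)) ((Fin q₁ × Fin p₂) ⊕ (Fin p₁ × Fin q₂)) R)
    (hE : E = fromBlocks (A₁ ⊗ₖ 1) (-(1 ⊗ₖ B₂)) (1 ⊗ₖ A₂) (B₁ ⊗ₖ 1))
    (hO : O = fromBlocks (B₁ ⊗ₖ 1) (1 ⊗ₖ B₂) (-(1 ⊗ₖ A₂)) (A₁ ⊗ₖ 1)) :
    O * E = (F₁ + F₂) • (1 : Matrix ((Fin p₁ × Fin p₂) ⊕ (Fin q₁ × Fin q₂))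
        ((Fin p₁ × Fin p₂) ⊕ (Fin q₁ × Fin q₂)) R) ∧
    E * O = (F₁ + F₂) • (1 : Matrix ((Fin q₁ × Fin p₂) ⊕ (Fin p₁ × Fin q₂))
        ((Fin q₁ × Fin p₂) ⊕ (Fin p₁ × Fin q₂)) R) := by
  subst hE hO
  constructor <;>
  · rw [Matrix.fromBlocks_multiply]
    simp only [Matrix.mul_neg, Matrix.neg_mul, ← Matrix.mul_kronecker_mul,
      Matrix.mul_one, Matrix.one_mul, h₁, h₁', h₂, h₂',
      Matrix.smul_kronecker, Matrix.kronecker_smul, Matrix.one_kronecker_one,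
      add_neg_cancel, neg_add_cancel, ← smul_add, ← add_smul]
    rw [← Matrix.fromBlocks_one, Matrix.fromBlocks_smul]
    simp [smul_zero, add_smul, add_comm]
end

section
/- Let R = MvPolynomial (Fin m) ℂ and F ∈ R. Let (A₁, B₁) be a matrix factorization of F and (A₂, B₂) a matrix factorization of −F (finite-rank, over R), and let E := fromBlocks (A₁ ⊗ₖ 1) (−(1 ⊗ₖ B₂)) (1 ⊗ₖ A₂) (B₁ ⊗ₖ 1) and O := fromBlocks (B₁ ⊗ₖ 1) (1 ⊗ₖ B₂) (−(1 ⊗ₖ A₂)) (A₁ ⊗ₖ 1) be the tensor-product matrices, so that O * E = 0 and E * O = 0 and (E, O) is a two-periodic complex of free R-modules. Then the homology of this complex is annihilated by every partial derivative of F: for every i : Fin m and every vector v in the kernel of mulVec E, the vector (pderiv i F) • v lies in the range of mulVec O, and for every vector w in the kernel of mulVec O, the vector (pderiv i F) • w lies in the range of mulVec E. -/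
open Matrix Kronecker MvPolynomial

private lemma matDeriv_mul {m : ℕ} (i : Fin m) {a b c : Type*} [Fintype b]
    (M : Matrix a b (MvPolynomial (Fin m) ℂ)) (N : Matrix b c (MvPolynomial (Fin m) ℂ)) :
    (M * N).map (pderiv i) = M.map (pderiv i) * N + M * N.map (pderiv i) := by
  ext r c
  simp only [Matrix.map_apply, Matrix.mul_apply, Matrix.add_apply, map_sum, pderiv_mul]
  rw [← Finset.sum_add_distrib]

private lemma matDeriv_smul_one {m : ℕ} (i : Fin m) {a : Type*} [DecidableEq a]
    (F : MvPolynomial (Fin m) ℂ) :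
    ((F • (1 : Matrix a a (MvPolynomial (Fin m) ℂ))).map (pderiv i)) = (pderiv i F) • 1 := by
  ext r c
  simp only [Matrix.map_apply, Matrix.smul_apply, Matrix.one_apply, smul_eq_mul]
  split <;> simp

set_option maxHeartbeats 2000000 in
theorem homology_of_tensor_product_supported_on_critical_locus
    (m p₁ q₁ p₂ q₂ : ℕ) (F : MvPolynomial (Fin m) ℂ)
    (A₁ : Matrix (Fin q₁) (Fin p₁) (MvPolynomial (Fin m) ℂ))
    (B₁ : Matrix (Fin p₁) (Fin q₁) (MvPolynomial (Fin m) ℂ))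
    (A₂ : Matrix (Fin q₂) (Fin p₂) (MvPolynomial (Fin m) ℂ))
    (B₂ : Matrix (Fin p₂) (Fin q₂) (MvPolynomial (Fin m) ℂ))
    (h₁ : A₁ * B₁ = F • (1 : Matrix (Fin q₁) (Fin q₁) (MvPolynomial (Fin m) ℂ)))
    (h₁' : B₁ * A₁ = F • (1 : Matrix (Fin p₁) (Fin p₁) (MvPolynomial (Fin m) ℂ)))
    (h₂ : A₂ * B₂ = (-F) • (1 : Matrix (Fin q₂) (Fin q₂) (MvPolynomial (Fin m) ℂ)))
    (h₂' : B₂ * A₂ = (-F) • (1 : Matrix (Fin p₂) (Fin p₂) (MvPolynomial (Fin m) ℂ)))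
    (E : Matrix ((Fin q₁ × Fin p₂) ⊕ (Fin p₁ × Fin q₂)) ((Fin p₁ × Fin p₂) ⊕ (Fin q₁ × Fin q₂))
      (MvPolynomial (Fin m) ℂ))
    (O : Matrix ((Fin p₁ × Fin p₂) ⊕ (Fin q₁ × Fin q₂)) ((Fin q₁ × Fin p₂) ⊕ (Fin p₁ × Fin q₂))
      (MvPolynomial (Fin m) ℂ))
    (hE : E = fromBlocks (A₁ ⊗ₖ 1) (-(1 ⊗ₖ B₂)) (1 ⊗ₖ A₂) (B₁ ⊗ₖ 1))
    (hO : O = fromBlocks (B₁ ⊗ₖ 1) (1 ⊗ₖ B₂) (-(1 ⊗ₖ A₂)) (A₁ ⊗ₖ 1))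
    (hOE : O * E = 0) (hEO : E * O = 0) :
    ∀ i : Fin m,
      (∀ v : ((Fin p₁ × Fin p₂) ⊕ (Fin q₁ × Fin q₂)) → MvPolynomial (Fin m) ℂ,
        E.mulVec v = 0 → ∃ u, O.mulVec u = (pderiv i F) • v) ∧
      (∀ w : ((Fin q₁ × Fin p₂) ⊕ (Fin p₁ × Fin q₂)) → MvPolynomial (Fin m) ℂ,
        O.mulVec w = 0 → ∃ u, E.mulVec u = (pderiv i F) • w) := by
  intro i
  set dA₁ := A₁.map (pderiv i) with hdA₁
  set dB₁ := B₁.map (pderiv i) with hdB₁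
  set dF := pderiv i F with hdF
  have hd₁ : dA₁ * B₁ + A₁ * dB₁ = dF • 1 := by
    rw [← matDeriv_mul, h₁, matDeriv_smul_one]
  have hd₁' : dB₁ * A₁ + B₁ * dA₁ = dF • 1 := by
    rw [← matDeriv_mul, h₁', matDeriv_smul_one]
  set K : Matrix ((Fin q₁ × Fin p₂) ⊕ (Fin p₁ × Fin q₂))
      ((Fin p₁ × Fin p₂) ⊕ (Fin q₁ × Fin q₂)) (MvPolynomial (Fin m) ℂ) :=
    fromBlocks (dA₁ ⊗ₖ 1) 0 0 (dB₁ ⊗ₖ 1) with hK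
  set L : Matrix ((Fin p₁ × Fin p₂) ⊕ (Fin q₁ × Fin q₂))
      ((Fin q₁ × Fin p₂) ⊕ (Fin p₁ × Fin q₂)) (MvPolynomial (Fin m) ℂ) :=
    fromBlocks (dB₁ ⊗ₖ 1) 0 0 (dA₁ ⊗ₖ 1) with hL
  have keyE : O * K + L * E = dF • 1 := by
    rw [hO, hE, hK, hL, fromBlocks_multiply, fromBlocks_multiply, fromBlocks_add,
      ← fromBlocks_one, fromBlocks_smul]
    rw [fromBlocks_inj]
    refine ⟨?_, ?_, ?_, ?_⟩
    · simp only [Matrix.mul_zero, Matrix.zero_mul, add_zero, zero_add, Matrix.neg_mul,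
        Matrix.mul_neg, neg_zero, ← mul_kronecker_mul, one_mul, mul_one, ← add_kronecker]
      rw [add_comm (B₁ * dA₁), hd₁', smul_kronecker, one_kronecker_one]
    · simp only [Matrix.mul_zero, Matrix.zero_mul, add_zero, zero_add, smul_zero,
        Matrix.mul_neg, Matrix.neg_mul, ← mul_kronecker_mul, Matrix.one_mul, Matrix.mul_one]
      abel
    · simp only [Matrix.mul_zero, Matrix.zero_mul, add_zero, zero_add, smul_zero,
        Matrix.mul_neg, Matrix.neg_mul, ← mul_kronecker_mul, Matrix.one_mul, Matrix.mul_one]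
      abel
    · simp only [Matrix.mul_zero, Matrix.zero_mul, add_zero, zero_add, Matrix.neg_mul,
        Matrix.mul_neg, neg_zero, ← mul_kronecker_mul, one_mul, mul_one, ← add_kronecker]
      rw [add_comm (A₁ * dB₁), hd₁, smul_kronecker, one_kronecker_one]
  have keyO : E * L + K * O = dF • 1 := by
    rw [hO, hE, hK, hL, fromBlocks_multiply, fromBlocks_multiply, fromBlocks_add,
      ← fromBlocks_one, fromBlocks_smul]
    rw [fromBlocks_inj]
    refine ⟨?_, ?_, ?_, ?_⟩
    · simp only [Matrix.mul_zero, Matrix.zero_mul, add_zero, zero_add, Matrix.neg_mul,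
        Matrix.mul_neg, neg_zero, ← mul_kronecker_mul, one_mul, mul_one, ← add_kronecker]
      rw [add_comm (A₁ * dB₁), hd₁, smul_kronecker, one_kronecker_one]
    · simp only [Matrix.mul_zero, Matrix.zero_mul, add_zero, zero_add, smul_zero,
        Matrix.mul_neg, Matrix.neg_mul, ← mul_kronecker_mul, Matrix.one_mul, Matrix.mul_one]
      abel
    · simp only [Matrix.mul_zero, Matrix.zero_mul, add_zero, zero_add, smul_zero,
        Matrix.mul_neg, Matrix.neg_mul, ← mul_kronecker_mul, Matrix.one_mul, Matrix.mul_one]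
      abel
    · simp only [Matrix.mul_zero, Matrix.zero_mul, add_zero, zero_add, Matrix.neg_mul,
        Matrix.mul_neg, neg_zero, ← mul_kronecker_mul, one_mul, mul_one, ← add_kronecker]
      rw [add_comm (B₁ * dA₁), hd₁', smul_kronecker, one_kronecker_one]
  constructor
  · intro v hv
    refine ⟨K.mulVec v, ?_⟩
    have h := congrArg (fun M => M.mulVec v) keyE
    simpa [Matrix.add_mulVec, Matrix.mulVec_mulVec, Matrix.smul_mulVec,
      ← Matrix.mulVec_mulVec, hv] using h
  · intro w hw
    refine ⟨L.mulVec w, ?_⟩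
    have h := congrArg (fun M => M.mulVec w) keyO
    simpa [Matrix.add_mulVec, Matrix.mulVec_mulVec, Matrix.smul_mulVec,
      ← Matrix.mulVec_mulVec, hw] using h
end

section
/- Let R be a commutative ring, and let X := !![x₁₁, x₁₂; 0, x₂₂] be an upper triangular 2×2 matrix, Y := !![0, y; 0, 0] a strictly upper triangular 2×2 matrix, and g an arbitrary 2×2 matrix over R with adjugate g.adjugate. Then the potential factors as a product of three terms: trace (X * g * Y * g.adjugate) = − y * (g 1 0) * ((g 0 0) * (x₁₁ − x₂₂) + (g 1 0) * x₁₂). (Equivalently, for invertible g, det(g) · Tr(X · Ad_g(Y)) = − y₁₂ · g₂₁ · (g₁₁(x₁₁ − x₂₂) + g₂₁ x₁₂), the factorization of the potential W̄(X, g, Y) = Tr(X Ad_g Y) for n = 2 underlying the Koszul matrix factorization C̄₊ of the elementary positive braid.) -/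
open Matrix

theorem potential_factorization_n_eq_two
    {R : Type*} [CommRing R] (x₁₁ x₁₂ x₂₂ y : R)
    (g : Matrix (Fin 2) (Fin 2) R) :
    trace ((!![x₁₁, x₁₂; 0, x₂₂] : Matrix (Fin 2) (Fin 2) R) * g *
        (!![0, y; 0, 0] : Matrix (Fin 2) (Fin 2) R) * g.adjugate)
      = -(y * g 1 0 * (g 0 0 * (x₁₁ - x₂₂) + g 1 0 * x₁₂)) := by
  rw [← Matrix.etaExpand_eq g]
  simp [Matrix.etaExpand, Matrix.adjugate_fin_two, Matrix.trace_fin_two,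
    Matrix.mul_fin_two, Matrix.of_apply, Matrix.vecHead, Matrix.vecTail, Function.comp]
  ring
end

section
/- Let K be a field, X := !![x₁₁, x₁₂; 0, x₂₂] an upper triangular 2×2 matrix over K, Y := !![0, y; 0, 0] a strictly upper triangular 2×2 matrix, and v⁰ := ![0, 1] ∈ (Fin 2 → K). Then the following are equivalent: (i) every K-subspace W ⊆ (Fin 2 → K) with v⁰ ∈ W, X.mulVec w ∈ W for all w ∈ W, and Y.mulVec w ∈ W for all w ∈ W, equals ⊤ (i.e. v⁰ is a cyclic vector for the pair (X, Y)); (ii) x₁₂ ≠ 0 ∨ y ≠ 0. -/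
open Matrix

theorem cyclicity_criterion_for_FHilb_two_free
    {K : Type*} [Field K] (x₁₁ x₁₂ x₂₂ y : K) :
    (∀ W : Submodule K (Fin 2 → K),
        (![0, 1] : Fin 2 → K) ∈ W →
        (∀ w ∈ W, (!![x₁₁, x₁₂; 0, x₂₂] : Matrix (Fin 2) (Fin 2) K).mulVec w ∈ W) →
        (∀ w ∈ W, (!![0, y; 0, 0] : Matrix (Fin 2) (Fin 2) K).mulVec w ∈ W) →
        W = ⊤)
      ↔ (x₁₂ ≠ 0 ∨ y ≠ 0) := by
  constructor
  · intro h
    by_contra hc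
    push_neg at hc
    obtain ⟨hx, hy⟩ := hc
    subst hx; subst hy
    -- counterexample submodule: vectors with first coordinate 0
    set W : Submodule K (Fin 2 → K) :=
      { carrier := {v | v 0 = 0}
        add_mem' := by intro a b ha hb; simp_all
        zero_mem' := rfl
        smul_mem' := by intro c a ha; simp_all }
    have hW : W = ⊤ := by
      apply h
      · rfl
      · intro w hw
        have hw0 : w 0 = 0 := hw
        show _ = 0
        simp [mulVec, dotProduct, Fin.sum_univ_two, hw0]
      · intro w hw
        show _ = 0
        simp [mulVec, dotProduct, Fin.sum_univ_two]
    have : (![1, 0] : Fin 2 → K) ∈ W := hW ▸ Submodule.mem_top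
    have : (1 : K) = 0 := this
    exact one_ne_zero this
  · intro h W hv hX hY
    have he1 : (![0, 1] : Fin 2 → K) ∈ W := hv
    have he0 : (![1, 0] : Fin 2 → K) ∈ W := by
      rcases h with h | h
      · have h1 : (!![x₁₁, x₁₂; 0, x₂₂] : Matrix (Fin 2) (Fin 2) K).mulVec ![0,1] ∈ W :=
          hX _ hv
        have heq : (!![x₁₁, x₁₂; 0, x₂₂] : Matrix (Fin 2) (Fin 2) K).mulVec ![0,1]
            = ![x₁₂, x₂₂] := by
          funext i; fin_cases i <;> simp [mulVec, dotProduct, Fin.sum_univ_two]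
        rw [heq] at h1
        have h2 : (![x₁₂, x₂₂] : Fin 2 → K) - x₂₂ • ![0,1] ∈ W :=
          W.sub_mem h1 (W.smul_mem _ hv)
        have heq2 : (![x₁₂, x₂₂] : Fin 2 → K) - x₂₂ • ![0,1] = x₁₂ • ![1,0] := by
          funext i; fin_cases i <;> simp
        rw [heq2] at h2
        have := W.smul_mem x₁₂⁻¹ h2
        rwa [smul_smul, inv_mul_cancel₀ h, one_smul] at this
      · have h1 : (!![0, y; 0, 0] : Matrix (Fin 2) (Fin 2) K).mulVec ![0,1] ∈ W :=
          hY _ hv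
        have heq : (!![0, y; 0, 0] : Matrix (Fin 2) (Fin 2) K).mulVec ![0,1]
            = y • ![1, 0] := by
          funext i; fin_cases i <;> simp [mulVec, dotProduct, Fin.sum_univ_two]
        rw [heq] at h1
        have := W.smul_mem y⁻¹ h1
        rwa [smul_smul, inv_mul_cancel₀ h, one_smul] at this
    ext v
    simp only [Submodule.mem_top, iff_true]
    have : v = v 0 • ![1, 0] + v 1 • ![0, 1] := by
      funext i; fin_cases i <;> simp
    rw [this]
    exact W.add_mem (W.smul_mem _ he0) (W.smul_mem _ he1)
end

section
/- Let P := MvPolynomial (Fin 2 × Fin 2) ℂ with variables a i j (the entries of a generic 2×2 matrix), let d := a 0 0 * a 1 1 − a 0 1 * a 1 0 be the determinant, and let A := Localization.Away d be the localization of P at d (the coordinate ring of GL₂). Let δ : Derivation ℂ A A be a ℂ-linear derivation satisfying δ(a 0 0) = 0, δ(a 1 0) = 0, δ(a 0 1) = −a 0 0, and δ(a 1 1) = −a 1 0 (where a i j and d denote their images in A). Then the kernel of δ equals the ℂ-subalgebra Algebra.adjoin ℂ {a 0 0, a 1 0, d, d⁻¹} of A generated by the first-column entries, the determinant, and its inverse: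 for x ∈ A, δ x = 0 if and only if x ∈ Algebra.adjoin ℂ {a 0 0, a 1 0, d, d⁻¹}. -/
open MvPolynomial

set_option synthInstance.maxHeartbeats 1000000
set_option maxHeartbeats 2000000

noncomputable def genDet : MvPolynomial (Fin 2 × Fin 2) ℂ :=
  X (0, 0) * X (1, 1) - X (0, 1) * X (1, 0)

namespace GL2Aux

abbrev R4 : Type := MvPolynomial (Fin 2 × Fin 2) ℂ
abbrev R3 : Type := MvPolynomial (Fin 3) ℂ

/-- the unipotent derivation on the polynomial ring -/
noncomputable def Dd : Derivation ℂ R4 R4 :=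
  mkDerivation ℂ (fun p => if p = ((0 : Fin 2), (1 : Fin 2)) then -X (0, 0)
    else if p = ((1 : Fin 2), (1 : Fin 2)) then -X (1, 0) else (0 : R4))

lemma Dd_X00 : Dd (X (0, 0)) = 0 := by
  rw [Dd, mkDerivation_X]; norm_num [Prod.ext_iff]

lemma Dd_X10 : Dd (X (1, 0)) = 0 := by
  rw [Dd, mkDerivation_X]; norm_num [Prod.ext_iff]

lemma Dd_X01 : Dd (X (0, 1)) = -X (0, 0) := by
  rw [Dd, mkDerivation_X]; norm_num [Prod.ext_iff]

lemma Dd_X11 : Dd (X (1, 1)) = -X (1, 0) := by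
  rw [Dd, mkDerivation_X]; norm_num [Prod.ext_iff]

lemma Dd_genDet : Dd genDet = 0 := by
  simp only [genDet, map_sub, Derivation.leibniz, Dd_X00, Dd_X10, Dd_X01, Dd_X11,
    smul_eq_mul]
  ring

/-- compatibility of `Dd` with an algebra map matching a derivation on the target -/
lemma comp_der {S : Type*} [CommRing S] [Algebra ℂ S]
    (F : R4 →ₐ[ℂ] S) (D₂ : Derivation ℂ S S)
    (h : ∀ i, F (Dd (X i)) = D₂ (F (X i))) (P : R4) : F (Dd P) = D₂ (F P) := by
  induction P using MvPolynomial.induction_on with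
  | C a =>
      rw [show (C a : R4) = algebraMap ℂ R4 a from rfl, Derivation.map_algebraMap,
        map_zero, AlgHom.commutes, Derivation.map_algebraMap]
  | add p q hp hq => rw [map_add, map_add, map_add, hp, hq, map_add]
  | mul_X p i hp =>
      rw [Derivation.leibniz, map_add, smul_eq_mul, smul_eq_mul, map_mul, map_mul, hp, h i,
        map_mul, Derivation.leibniz, smul_eq_mul, smul_eq_mul]
      try ring


lemma genDet_ne_zero : genDet ≠ 0 := by
  intro h
  have := congrArg (eval (fun p : Fin 2 × Fin 2 => if p.1 = p.2 then (1 : ℂ) else 0)) h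
  simp [genDet] at this

lemma X00_ne_zero : (X ((0 : Fin 2), (0 : Fin 2)) : R4) ≠ 0 := X_ne_zero _

/-- the map realizing the invariant subalgebra -/
noncomputable def gR : R3 →ₐ[ℂ] R4 := aeval ![X (0, 0), X (1, 0), genDet]

lemma gR_X0 : gR (X 0) = X (0, 0) := by simp [gR]
lemma gR_X1 : gR (X 1) = X (1, 0) := by simp [gR]
lemma gR_X2 : gR (X 2) = genDet := by simp [gR]

abbrev T : Type := Localization.Away (X (0 : Fin 3) : R3)

instance : IsDomain T :=
  IsLocalization.isDomain_localization
    (powers_le_nonZeroDivisors_of_noZeroDivisors (X_ne_zero _))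

instance : CharZero T :=
  charZero_of_injective_algebraMap (algebraMap ℂ T).injective

noncomputable def t0 : T := algebraMap R3 T (X 0)
noncomputable def t1 : T := algebraMap R3 T (X 1)
noncomputable def t2 : T := algebraMap R3 T (X 2)
noncomputable def i0 : T := IsLocalization.Away.invSelf (S := Localization.Away (X (0 : Fin 3) : R3)) (X (0 : Fin 3) : R3)

lemma t0_mul_i0 : t0 * i0 = 1 := IsLocalization.Away.mul_invSelf (X (0 : Fin 3) : R3)

lemma t0_ne_zero : t0 ≠ 0 := by
  intro h
  have : i0 * 0 = 1 := by rw [← h, mul_comm]; exact t0_mul_i0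
  simp at this

noncomputable def evf : Fin 2 × Fin 2 → Polynomial T := fun p =>
  if p = (0, 0) then Polynomial.C t0
  else if p = (0, 1) then Polynomial.X
  else if p = (1, 0) then Polynomial.C t1
  else Polynomial.C (i0 * t2) + Polynomial.X * Polynomial.C (i0 * t1)

noncomputable def ev : R4 →ₐ[ℂ] Polynomial T := aeval evf

lemma ev_X00 : ev (X (0, 0)) = Polynomial.C t0 := by
  rw [ev, aeval_X, evf]; norm_num
lemma ev_X01 : ev (X (0, 1)) = Polynomial.X := by
  rw [ev, aeval_X, evf]; norm_num [Prod.ext_iff]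
lemma ev_X10 : ev (X (1, 0)) = Polynomial.C t1 := by
  rw [ev, aeval_X, evf]; norm_num [Prod.ext_iff]
lemma ev_X11 : ev (X (1, 1)) =
    Polynomial.C (i0 * t2) + Polynomial.X * Polynomial.C (i0 * t1) := by
  rw [ev, aeval_X, evf]; norm_num [Prod.ext_iff]

lemma ev_genDet : ev genDet = Polynomial.C t2 := by
  rw [genDet, map_sub, map_mul, map_mul, ev_X00, ev_X01, ev_X10, ev_X11]
  have e1 : Polynomial.C t0 * Polynomial.C (i0 * t2) = Polynomial.C t2 := by
    rw [← Polynomial.C_mul, ← mul_assoc, t0_mul_i0, one_mul]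
  have e2 : Polynomial.C t0 * Polynomial.C (i0 * t1) = Polynomial.C t1 := by
    rw [← Polynomial.C_mul, ← mul_assoc, t0_mul_i0, one_mul]
  rw [mul_add, e1, mul_left_comm (Polynomial.C t0) Polynomial.X, e2]
  ring

lemma ev_gR (Q : R3) : ev (gR Q) = Polynomial.C (algebraMap R3 T Q) := by
  have : ev.comp gR = (Polynomial.CAlgHom).comp
      (IsScalarTower.toAlgHom ℂ R3 T) := by
    apply MvPolynomial.algHom_ext
    intro i
    fin_cases i
    · show ev (gR (X 0)) = (Polynomial.CAlgHom : T →ₐ[ℂ] Polynomial T) ((IsScalarTower.toAlgHom ℂ R3 T) (X 0))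
      rw [gR_X0, ev_X00]; rfl
    · show ev (gR (X 1)) = (Polynomial.CAlgHom : T →ₐ[ℂ] Polynomial T) ((IsScalarTower.toAlgHom ℂ R3 T) (X 1))
      rw [gR_X1, ev_X10]; rfl
    · show ev (gR (X 2)) = (Polynomial.CAlgHom : T →ₐ[ℂ] Polynomial T) ((IsScalarTower.toAlgHom ℂ R3 T) (X 2))
      rw [gR_X2, ev_genDet]; rfl
  simpa using congrArg (fun f => f Q) (congrArg (fun (f : _ →ₐ[ℂ] _) => (f : R3 → Polynomial T)) this)

lemma gR_injective : Function.Injective gR := by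
  have h1 : Function.Injective (algebraMap R3 T) :=
    IsLocalization.injective (M := Submonoid.powers (X (0 : Fin 3) : R3)) T
      (powers_le_nonZeroDivisors_of_noZeroDivisors (X_ne_zero _))
  intro a b hab
  apply h1
  apply Polynomial.C_injective
  rw [← ev_gR, ← ev_gR, hab]


abbrev K : Type := FractionRing R4

noncomputable def f3 : R3 →+* K :=
  (aeval (R := ℂ) ![algebraMap R4 K (X (0, 0)), algebraMap R4 K (X (1, 0)),
    algebraMap R4 K genDet]).toRingHom

lemma f3_X0 : f3 (X 0) = algebraMap R4 K (X (0, 0)) := by simp [f3]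
lemma f3_X1 : f3 (X 1) = algebraMap R4 K (X (1, 0)) := by simp [f3]
lemma f3_X2 : f3 (X 2) = algebraMap R4 K genDet := by simp [f3]

lemma iota_X00_ne : algebraMap R4 K (X (0, 0)) ≠ 0 := by
  intro h
  exact X00_ne_zero (IsFractionRing.injective R4 K (by rw [h, map_zero]))

lemma f3_unit : IsUnit (f3 (X (0 : Fin 3))) := by
  rw [f3_X0]
  exact isUnit_iff_ne_zero.mpr iota_X00_ne

noncomputable def flift : T →+* K := IsLocalization.Away.lift (X (0 : Fin 3) : R3) f3_unit

lemma flift_alg (a : R3) : flift (algebraMap R3 T a) = f3 a :=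
  IsLocalization.Away.lift_eq _ _ _

noncomputable def chi : Polynomial T →+* K :=
  Polynomial.eval₂RingHom flift (algebraMap R4 K (X (0, 1)))

lemma flift_i0 : flift i0 = (algebraMap R4 K (X (0, 0)))⁻¹ := by
  have h1 : flift t0 * flift i0 = 1 := by rw [← map_mul, t0_mul_i0, map_one]
  rw [t0, flift_alg, f3_X0] at h1
  exact ((inv_eq_of_mul_eq_one_right h1).symm)

lemma chi_C (t : T) : chi (Polynomial.C t) = flift t := Polynomial.eval₂_C _ _

lemma chi_X : chi Polynomial.X = algebraMap R4 K (X (0, 1)) := Polynomial.eval₂_X _ _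

lemma chi_ev (Q : R4) : chi (ev Q) = algebraMap R4 K Q := by
  have hx := iota_X00_ne
  have hrel : algebraMap R4 K (X (0, 0)) * algebraMap R4 K (X (1, 1))
      = algebraMap R4 K genDet
        + algebraMap R4 K (X (0, 1)) * algebraMap R4 K (X (1, 0)) := by
    have := congrArg (algebraMap R4 K)
      (show (X (0, 0) * X (1, 1) : R4) = genDet + X (0, 1) * X (1, 0) by rw [genDet]; ring)
    rw [RingHom.map_mul, RingHom.map_add, RingHom.map_mul] at this
    exact this
  have key : chi.comp (ev : R4 →+* Polynomial T) = algebraMap R4 K := by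
    apply MvPolynomial.ringHom_ext
    · intro r
      show chi (ev (C r)) = algebraMap R4 K (C r)
      have h1 : ev (C r) = Polynomial.C (algebraMap ℂ T r) := by
        rw [show (C r : R4) = algebraMap ℂ R4 r from rfl, AlgHom.commutes,
          Polynomial.algebraMap_apply]
      rw [h1, chi_C, IsScalarTower.algebraMap_apply ℂ R3 T, ← algebraMap_eq, flift_alg,
        ← IsScalarTower.algebraMap_apply ℂ R4 K]
      simp [f3]
    · intro i
      show chi (ev (X i)) = algebraMap R4 K (X i)
      obtain ⟨a, b⟩ := i
      fin_cases a <;> fin_cases b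
      · show chi (ev (X (0, 0))) = algebraMap R4 K (X (0, 0))
        rw [ev_X00, chi_C, t0, flift_alg, f3_X0]
      · show chi (ev (X (0, 1))) = algebraMap R4 K (X (0, 1))
        rw [ev_X01, chi_X]
      · show chi (ev (X (1, 0))) = algebraMap R4 K (X (1, 0))
        rw [ev_X10, chi_C, t1, flift_alg, f3_X1]
      · show chi (ev (X (1, 1))) = algebraMap R4 K (X (1, 1))
        rw [ev_X11]
        simp only [map_add, map_mul, chi_C, chi_X]
        rw [flift_i0, t1, t2, flift_alg, flift_alg, f3_X1, f3_X2]
        simp only [Prod.mk_zero_zero, Prod.mk_one_one] at hrel ⊢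
        field_simp
        linear_combination -hrel
  exact congrArg (fun f => f Q) key

lemma ev_injective : Function.Injective ev := by
  intro a b h
  apply IsFractionRing.injective R4 K
  rw [← chi_ev a, ← chi_ev b, h]


noncomputable def D2 : Derivation ℂ (Polynomial T) (Polynomial T) :=
  (-Polynomial.C t0) • ((Polynomial.derivative' (R := T)).restrictScalars ℂ)

lemma D2_apply (f : Polynomial T) :
    D2 f = -(Polynomial.C t0 * Polynomial.derivative f) := by
  rw [D2]
  show (-Polynomial.C t0) • ((Polynomial.derivative' (R := T)).restrictScalars ℂ f) = _
  rw [Derivation.restrictScalars_apply]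
  show (-Polynomial.C t0) * Polynomial.derivative f = _
  ring

lemma ev_Dd (P : R4) : ev (Dd P) = D2 (ev P) := by
  refine comp_der (S := Polynomial T) ev D2 ?_ P
  intro i
  obtain ⟨a, b⟩ := i
  fin_cases a <;> fin_cases b
  · show ev (Dd (X (0, 0))) = D2 (ev (X (0, 0)))
    rw [Dd_X00, map_zero, ev_X00, D2_apply, Polynomial.derivative_C, mul_zero]
    ring
  · show ev (Dd (X (0, 1))) = D2 (ev (X (0, 1)))
    rw [Dd_X01, map_neg, ev_X00, ev_X01, D2_apply, Polynomial.derivative_X, mul_one]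
  · show ev (Dd (X (1, 0))) = D2 (ev (X (1, 0)))
    rw [Dd_X10, map_zero, ev_X10, D2_apply, Polynomial.derivative_C, mul_zero]
    ring
  · show ev (Dd (X (1, 1))) = D2 (ev (X (1, 1)))
    rw [Dd_X11, map_neg, ev_X10, ev_X11, D2_apply]
    have h2 : t0 * (i0 * t1) = t1 := by rw [← mul_assoc, t0_mul_i0, one_mul]
    rw [Polynomial.derivative_add, Polynomial.derivative_C, Polynomial.derivative_mul,
      Polynomial.derivative_X, Polynomial.derivative_C, one_mul, mul_zero, add_zero,
      zero_add, ← Polynomial.C_mul, h2]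

lemma exists_pow (P : R4) (hP : Dd P = 0) :
    ∃ (N : ℕ) (A : R3), X (0, 0) ^ N * P = gR A := by
  have hcomp := ev_Dd P
  rw [hP, map_zero, D2_apply] at hcomp
  have hder : Polynomial.derivative (ev P) = 0 := by
    have h0 : -(Polynomial.C t0 * Polynomial.derivative (ev P)) = 0 := hcomp.symm
    have h1 : Polynomial.C t0 * Polynomial.derivative (ev P) = 0 := by
      rw [← neg_neg (Polynomial.C t0 * Polynomial.derivative (ev P)), h0]
      ring
    rcases mul_eq_zero.mp h1 with h | h
    · exact absurd (by simpa using h) t0_ne_zero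
    · exact h
  haveI : IsAddTorsionFree T := IsDomain.instIsAddTorsionFreeOfCharZero T
  have hC := Polynomial.eq_C_of_derivative_eq_zero hder
  obtain ⟨⟨A, s⟩, hs⟩ :=
    IsLocalization.surj (M := Submonoid.powers (X (0 : Fin 3) : R3)) ((ev P).coeff 0)
  obtain ⟨N, hN⟩ := s.2
  have hN' : (X (0 : Fin 3) : R3) ^ N = ↑s := hN
  refine ⟨N, A, ev_injective ?_⟩
  rw [map_mul, map_pow, ev_X00, ev_gR, hC, ← Polynomial.C_pow, ← Polynomial.C_mul]
  congr 1
  rw [t0, ← map_pow, hN', mul_comm]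
  exact hs


noncomputable def rho : R4 →ₐ[ℂ] R4 := rename (fun p => (p.1 + 1, p.2))

lemma rho_rho (P : R4) : rho (rho P) = P := by
  rw [rho, rename_rename]
  have h : ((fun p : Fin 2 × Fin 2 => (p.1 + 1, p.2)) ∘ fun p : Fin 2 × Fin 2 =>
      (p.1 + 1, p.2)) = id := by
    funext p; obtain ⟨a, b⟩ := p; fin_cases a <;> rfl
  rw [h, rename_id, AlgHom.id_apply]

lemma rho_X (p : Fin 2 × Fin 2) : rho (X p) = X (p.1 + 1, p.2) := rename_X _ _

lemma rho_genDet : rho genDet = -genDet := by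
  rw [genDet, map_sub, map_mul, map_mul, rho_X, rho_X, rho_X, rho_X]
  show X (1, 0) * X (0, 1) - X (1, 1) * X (0, 0) = -genDet
  rw [genDet]; ring

lemma rho_Dd (P : R4) : rho (Dd P) = Dd (rho P) := by
  refine comp_der (S := R4) rho Dd ?_ P
  intro i
  obtain ⟨a, b⟩ := i
  fin_cases a <;> fin_cases b
  · show rho (Dd (X (0, 0))) = Dd (rho (X (0, 0)))
    rw [Dd_X00, map_zero, rho_X]
    show (0 : R4) = Dd (X (1, 0))
    rw [Dd_X10]
  · show rho (Dd (X (0, 1))) = Dd (rho (X (0, 1)))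
    rw [Dd_X01, map_neg, rho_X, rho_X]
    show -X (1, 0) = Dd (X (1, 1))
    rw [Dd_X11]
  · show rho (Dd (X (1, 0))) = Dd (rho (X (1, 0)))
    rw [Dd_X10, map_zero, rho_X]
    show (0 : R4) = Dd (X (0, 0))
    rw [Dd_X00]
  · show rho (Dd (X (1, 1))) = Dd (rho (X (1, 1)))
    rw [Dd_X11, map_neg, rho_X, rho_X]
    show -X (0, 0) = Dd (X (0, 1))
    rw [Dd_X01]

noncomputable def wmap : R3 →ₐ[ℂ] R3 := aeval ![X 1, X 0, -X 2]

lemma wmap_X0 : wmap (X 0) = X 1 := by simp [wmap]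
lemma wmap_X1 : wmap (X 1) = X 0 := by simp [wmap]
lemma wmap_X2 : wmap (X 2) = -X 2 := by simp [wmap]

lemma rho_gR (Q : R3) : rho (gR Q) = gR (wmap Q) := by
  have h : rho.comp gR = gR.comp wmap := by
    apply MvPolynomial.algHom_ext
    intro i
    fin_cases i
    · show rho (gR (X 0)) = gR (wmap (X 0))
      rw [gR_X0, rho_X, wmap_X0, gR_X1]; exact rfl
    · show rho (gR (X 1)) = gR (wmap (X 1))
      rw [gR_X1, rho_X, wmap_X1, gR_X0]; exact rfl
    · show rho (gR (X 2)) = gR (wmap (X 2))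
      rw [gR_X2, rho_genDet, wmap_X2, map_neg, gR_X2]
  exact congrArg (fun f => f Q) (congrArg (fun (f : R3 →ₐ[ℂ] R4) => (f : R3 → R4)) h)

lemma exists_pow_y (P : R4) (hP : Dd P = 0) :
    ∃ (M : ℕ) (B : R3), X (1, 0) ^ M * P = gR B := by
  obtain ⟨N, A, hA⟩ := exists_pow (rho P) (by rw [← rho_Dd, hP, map_zero])
  refine ⟨N, wmap A, ?_⟩
  have := congrArg rho hA
  rw [map_mul, map_pow, rho_X, rho_rho, rho_gR] at this
  exact this

lemma prime_X0 : Prime (X (0 : Fin 3) : R3) := by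
  refine comap_prime (MvPolynomial.finSuccEquiv ℂ 2) (MvPolynomial.finSuccEquiv ℂ 2).symm
    (fun a => by simp) ?_
  rw [MvPolynomial.finSuccEquiv_X_zero]
  exact Polynomial.prime_X

lemma X0_not_dvd_X1 : ¬ ((X (0 : Fin 3) : R3) ∣ X 1) := by
  rintro ⟨c, hc⟩
  have h := congrArg (aeval (![0, 1, 0] : Fin 3 → ℂ)) hc
  simp at h

lemma descend (N : ℕ) : ∀ (M : ℕ) (A B : R3) (P : R4),
    X (0, 0) ^ N * P = gR A → X (1, 0) ^ M * P = gR B → ∃ Cq, P = gR Cq := by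
  induction N with
  | zero =>
      intro M A B P hA hB
      exact ⟨A, by simpa using hA⟩
  | succ n ih =>
      intro M A B P hA hB
      have key : (X 1 : R3) ^ M * A = X 0 ^ (n + 1) * B := by
        apply gR_injective
        rw [map_mul, map_mul, map_pow, map_pow, gR_X0, gR_X1, ← hA, ← hB]
        ring
      have hdvd : (X 0 : R3) ∣ X 1 ^ M * A := ⟨X 0 ^ n * B, by rw [key]; ring⟩
      have hA0 : (X 0 : R3) ∣ A := by
        rcases (prime_X0.dvd_mul).mp hdvd with h | h
        · exact absurd (prime_X0.dvd_of_dvd_pow h) X0_not_dvd_X1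
        · exact h
      obtain ⟨A', rfl⟩ := hA0
      refine ih M A' B P ?_ hB
      apply mul_left_cancel₀ X00_ne_zero
      rw [map_mul, gR_X0] at hA
      rw [← hA]
      ring

end GL2Aux

open GL2Aux in
theorem kernel_of_unipotent_derivation_on_GL2
    (δ : Derivation ℂ (Localization.Away genDet) (Localization.Away genDet))
    (h00 : δ (algebraMap (MvPolynomial (Fin 2 × Fin 2) ℂ) (Localization.Away genDet) (X (0, 0))) = 0)
    (h10 : δ (algebraMap (MvPolynomial (Fin 2 × Fin 2) ℂ) (Localization.Away genDet) (X (1, 0))) = 0)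
    (h01 : δ (algebraMap (MvPolynomial (Fin 2 × Fin 2) ℂ) (Localization.Away genDet) (X (0, 1)))
      = -(algebraMap (MvPolynomial (Fin 2 × Fin 2) ℂ) (Localization.Away genDet) (X (0, 0))))
    (h11 : δ (algebraMap (MvPolynomial (Fin 2 × Fin 2) ℂ) (Localization.Away genDet) (X (1, 1)))
      = -(algebraMap (MvPolynomial (Fin 2 × Fin 2) ℂ) (Localization.Away genDet) (X (1, 0)))) :
    ∀ x : Localization.Away genDet,
      δ x = 0 ↔ x ∈ Algebra.adjoin ℂ
        ({algebraMap (MvPolynomial (Fin 2 × Fin 2) ℂ) (Localization.Away genDet) (X (0, 0)),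
          algebraMap (MvPolynomial (Fin 2 × Fin 2) ℂ) (Localization.Away genDet) (X (1, 0)),
          algebraMap (MvPolynomial (Fin 2 × Fin 2) ℂ) (Localization.Away genDet) genDet,
          IsLocalization.Away.invSelf genDet} : Set (Localization.Away genDet)) := by
  intro x
  have hd : δ (algebraMap R4 (Localization.Away genDet) genDet) = 0 := by
    have e1 := congrArg (algebraMap R4 (Localization.Away genDet))
      (show genDet = X (0, 0) * X (1, 1) - X (0, 1) * X (1, 0) from rfl)
    rw [map_sub, map_mul, map_mul] at e1
    rw [e1, map_sub, Derivation.leibniz, Derivation.leibniz, h00, h01, h10, h11]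
    simp only [smul_eq_mul]
    ring
  have hunit : algebraMap R4 (Localization.Away genDet) genDet * IsLocalization.Away.invSelf genDet = 1 :=
    IsLocalization.Away.mul_invSelf genDet
  have hinv : δ (IsLocalization.Away.invSelf genDet) = 0 := by
    have h1 := congrArg δ hunit
    rw [Derivation.leibniz, Derivation.map_one_eq_zero, hd, smul_zero, add_zero,
      smul_eq_mul] at h1
    have h2 : δ (IsLocalization.Away.invSelf genDet)
        = IsLocalization.Away.invSelf genDet
          * (algebraMap R4 (Localization.Away genDet) genDet * δ (IsLocalization.Away.invSelf genDet)) := by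
      rw [← mul_assoc, mul_comm (IsLocalization.Away.invSelf genDet), hunit, one_mul]
    rw [h2, h1, mul_zero]
  constructor
  · intro hker
    obtain ⟨⟨P, s⟩, hs⟩ := IsLocalization.surj (M := Submonoid.powers genDet) x
    obtain ⟨n, hn⟩ := s.2
    have hn' : genDet ^ n = ↑s := hn
    have hsP : x * algebraMap R4 (Localization.Away genDet) genDet ^ n = algebraMap R4 (Localization.Away genDet) P := by
      rw [← map_pow, hn']; exact hs
    have hdP : δ (algebraMap R4 (Localization.Away genDet) P) = 0 := by
      rw [← hsP, Derivation.leibniz, Derivation.leibniz_pow, hd, hker]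
      simp
    have hDd : Dd P = 0 := by
      apply IsLocalization.injective (M := Submonoid.powers genDet) (Localization.Away genDet)
        (powers_le_nonZeroDivisors_of_noZeroDivisors genDet_ne_zero)
      have hcomp := comp_der (S := Localization.Away genDet) (IsScalarTower.toAlgHom ℂ R4 (Localization.Away genDet)) δ ?_ P
      · rw [map_zero]
        exact hcomp.trans hdP
      · intro i
        obtain ⟨a, b⟩ := i
        fin_cases a <;> fin_cases b
        · show algebraMap R4 (Localization.Away genDet) (Dd (X (0, 0))) = δ (algebraMap R4 (Localization.Away genDet) (X (0, 0)))
          rw [Dd_X00, map_zero, h00]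
        · show algebraMap R4 (Localization.Away genDet) (Dd (X (0, 1))) = δ (algebraMap R4 (Localization.Away genDet) (X (0, 1)))
          rw [Dd_X01, map_neg, h01]
        · show algebraMap R4 (Localization.Away genDet) (Dd (X (1, 0))) = δ (algebraMap R4 (Localization.Away genDet) (X (1, 0)))
          rw [Dd_X10, map_zero, h10]
        · show algebraMap R4 (Localization.Away genDet) (Dd (X (1, 1))) = δ (algebraMap R4 (Localization.Away genDet) (X (1, 1)))
          rw [Dd_X11, map_neg, h11]
    obtain ⟨N, Aq, hA⟩ := exists_pow P hDd
    obtain ⟨M, Bq, hB⟩ := exists_pow_y P hDd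
    obtain ⟨Cq, hC⟩ := descend N M Aq Bq P hA hB
    have hsub : algebraMap R4 (Localization.Away genDet) P ∈ Algebra.adjoin ℂ
        ({algebraMap R4 (Localization.Away genDet) (X (0, 0)), algebraMap R4 (Localization.Away genDet) (X (1, 0)),
          algebraMap R4 (Localization.Away genDet) genDet, IsLocalization.Away.invSelf genDet} : Set (Localization.Away genDet)) := by
      rw [hC]
      have heq : algebraMap R4 (Localization.Away genDet) (gR Cq)
          = aeval (fun i => (IsScalarTower.toAlgHom ℂ R4 (Localization.Away genDet)) (![X (0, 0), X (1, 0), genDet] i)) Cq := by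
        have := MvPolynomial.comp_aeval (f := (![X (0, 0), X (1, 0), genDet] : Fin 3 → R4))
          (φ := IsScalarTower.toAlgHom ℂ R4 (Localization.Away genDet))
        exact congrArg (fun (f : R3 →ₐ[ℂ] Localization.Away genDet) => f Cq) this
      rw [heq]
      have hr : (Algebra.adjoin ℂ (Set.range
          (fun i => (IsScalarTower.toAlgHom ℂ R4 (Localization.Away genDet)) (![X (0, 0), X (1, 0), genDet] i)))) ≤
          Algebra.adjoin ℂ ({algebraMap R4 (Localization.Away genDet) (X (0, 0)), algebraMap R4 (Localization.Away genDet) (X (1, 0)),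
            algebraMap R4 (Localization.Away genDet) genDet, IsLocalization.Away.invSelf genDet} : Set (Localization.Away genDet)) := by
        apply Algebra.adjoin_mono
        rintro _ ⟨i, rfl⟩
        fin_cases i
        · exact Set.mem_insert _ _
        · exact Set.mem_insert_of_mem _ (Set.mem_insert _ _)
        · exact Set.mem_insert_of_mem _ (Set.mem_insert_of_mem _ (Set.mem_insert _ _))
      apply hr
      rw [Algebra.adjoin_range_eq_range_aeval]
      exact ⟨Cq, rfl⟩
    have hx : x = algebraMap R4 (Localization.Away genDet) P * (IsLocalization.Away.invSelf genDet) ^ n := by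
      have h1 : algebraMap R4 (Localization.Away genDet) genDet ^ n * IsLocalization.Away.invSelf genDet ^ n = 1 := by
        rw [← mul_pow, hunit, one_pow]
      calc x = x * (algebraMap R4 (Localization.Away genDet) genDet ^ n * IsLocalization.Away.invSelf genDet ^ n) := by
              rw [h1, mul_one]
        _ = (x * algebraMap R4 (Localization.Away genDet) genDet ^ n) * IsLocalization.Away.invSelf genDet ^ n := by
              ring
        _ = algebraMap R4 (Localization.Away genDet) P * IsLocalization.Away.invSelf genDet ^ n := by rw [hsP]
    rw [hx]
    exact mul_mem hsub (pow_mem (Algebra.subset_adjoin (by simp)) n)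
  · intro hmem
    induction hmem using Algebra.adjoin_induction with
    | mem y hy =>
        simp only [Set.mem_insert_iff, Set.mem_singleton_iff] at hy
        rcases hy with rfl | rfl | rfl | rfl
        · exact h00
        · exact h10
        · exact hd
        · exact hinv
    | algebraMap r => exact δ.map_algebraMap r
    | add a b ha hb hA hB => rw [map_add, hA, hB, add_zero]
    | mul a b ha hb hA hB => rw [Derivation.leibniz, hA, hB, smul_zero, smul_zero, add_zero]
end

section
/- In the braid group Br_n on n strands, presented with generators σ₁, …, σ_{n−1} and the Artin relations σᵢσᵢ₊₁σᵢ = σᵢ₊₁σᵢσᵢ₊₁ (1 ≤ i ≤ n−2) and σᵢσⱼ = σⱼσᵢ (|i−j| > 1), the Jucys–Murphy elements δᵢ := σᵢ σᵢ₊₁ ⋯ σ_{n−2} σ_{n−1}² σ_{n−2} ⋯ σᵢ₊₁ σᵢ (for 1 ≤ i ≤ n−1) pairwise commute: δᵢ δⱼ = δⱼ δᵢ for all 1 ≤ i, j ≤ n−1. -/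
def braidRels (n : ℕ) : Set (FreeGroup (Fin (n - 1))) :=
  {r | (∃ i j : Fin (n - 1), (i : ℕ) + 1 = (j : ℕ) ∧
          r = FreeGroup.of i * FreeGroup.of j * FreeGroup.of i *
              (FreeGroup.of j * FreeGroup.of i * FreeGroup.of j)⁻¹) ∨
       (∃ i j : Fin (n - 1), (i : ℕ) + 1 < (j : ℕ) ∧
          r = FreeGroup.of i * FreeGroup.of j * (FreeGroup.of j * FreeGroup.of i)⁻¹)}

abbrev BraidGroup (n : ℕ) : Type := PresentedGroup (braidRels n)

def braidGen (n k : ℕ) : BraidGroup n :=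
  if h : k < n - 1 then PresentedGroup.of (⟨k, h⟩ : Fin (n - 1)) else 1

def jm (n i : ℕ) : BraidGroup n :=
  ((List.range' i (n - 1 - i)).map (braidGen n)).prod *
    ((List.range' i (n - 1 - i)).reverse.map (braidGen n)).prod

lemma rel_eq_one {n : ℕ} {r : FreeGroup (Fin (n-1))} (h : r ∈ braidRels n) :
    (QuotientGroup.mk r : BraidGroup n) = 1 := by
  rw [QuotientGroup.eq_one_iff]
  exact Subgroup.subset_normalClosure h

lemma braidGen_eq_one {n k : ℕ} (h : n - 1 ≤ k) : braidGen n k = 1 := by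
  simp [braidGen, Nat.not_lt.mpr h]

lemma braid_rel1 {n : ℕ} (k : ℕ) (h : k + 1 < n - 1) :
    braidGen n k * braidGen n (k+1) * braidGen n k
      = braidGen n (k+1) * braidGen n k * braidGen n (k+1) := by
  have hk : k < n - 1 := by omega
  have hr : (FreeGroup.of (⟨k, hk⟩ : Fin (n-1)) * FreeGroup.of (⟨k+1, h⟩ : Fin (n-1)) *
      FreeGroup.of (⟨k, hk⟩ : Fin (n-1)) *
      (FreeGroup.of (⟨k+1, h⟩ : Fin (n-1)) * FreeGroup.of (⟨k, hk⟩ : Fin (n-1)) *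
        FreeGroup.of (⟨k+1, h⟩ : Fin (n-1)))⁻¹) ∈ braidRels n :=
    Or.inl ⟨⟨k, hk⟩, ⟨k+1, h⟩, rfl, rfl⟩
  have := rel_eq_one hr
  rw [QuotientGroup.mk_mul, QuotientGroup.mk_inv, mul_inv_eq_one] at this
  simp [braidGen, hk, h, PresentedGroup.of]; exact this

lemma braid_rel2 {n : ℕ} (k l : ℕ) (h : k + 1 < l) :
    Commute (braidGen n k) (braidGen n l) := by
  rcases le_or_gt (n - 1) l with hl | hl
  · rw [braidGen_eq_one hl]; exact Commute.one_right _
  · have hk : k < n - 1 := by omega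
    have hr : (FreeGroup.of (⟨k, hk⟩ : Fin (n-1)) * FreeGroup.of (⟨l, hl⟩ : Fin (n-1)) *
        (FreeGroup.of (⟨l, hl⟩ : Fin (n-1)) * FreeGroup.of (⟨k, hk⟩ : Fin (n-1)))⁻¹) ∈ braidRels n :=
      Or.inr ⟨⟨k, hk⟩, ⟨l, hl⟩, h, rfl⟩
    have := rel_eq_one hr
    rw [QuotientGroup.mk_mul, QuotientGroup.mk_inv, mul_inv_eq_one] at this
    have : braidGen n k * braidGen n l = braidGen n l * braidGen n k := by
      simp [braidGen, hk, hl, PresentedGroup.of]; exact this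
    exact this

lemma jm_eq_one {n : ℕ} {m : ℕ} (h : n - 1 ≤ m) : jm n m = 1 := by
  unfold jm
  rw [Nat.sub_eq_zero_of_le h]
  simp

lemma jm_succ {n : ℕ} {i : ℕ} (h : i < n - 1) :
    jm n i = braidGen n i * jm n (i+1) * braidGen n i := by
  unfold jm
  have h2 : n - 1 - i = (n - 1 - (i+1)) + 1 := by omega
  rw [h2, List.range'_succ]
  simp [List.prod_append, mul_assoc]

lemma commute_far {n : ℕ} (k m : ℕ) (h : k + 1 < m) :
    Commute (braidGen n k) (jm n m) := by
  unfold jm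
  have hmem : ∀ x ∈ (List.range' m (n - 1 - m)).map (braidGen n),
      Commute (braidGen n k) x := by
    intro x hx
    rcases List.mem_map.mp hx with ⟨l, hl, rfl⟩
    have := (List.mem_range'_1.mp hl).1
    exact braid_rel2 k l (by omega)
  have hmem' : ∀ x ∈ (List.range' m (n - 1 - m)).reverse.map (braidGen n),
      Commute (braidGen n k) x := by
    intro x hx
    rcases List.mem_map.mp hx with ⟨l, hl, rfl⟩
    have := (List.mem_range'_1.mp (List.mem_reverse.mp hl)).1
    exact braid_rel2 k l (by omega)
  exact (Commute.list_prod_right _ _ hmem).mul_right (Commute.list_prod_right _ _ hmem')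

lemma key_aux {G : Type*} [Group G] (a b X : G)
    (hb : a * b * a = b * a * b) (hc : a * X = X * a) :
    b * (a * (b * X * b) * a) = (a * (b * X * b) * a) * b := by
  calc b * (a * (b * X * b) * a) = (b * a * b) * X * (b * a) := by group
    _ = (a * b * a) * X * (b * a) := by rw [← hb]
    _ = (a * b) * (a * X) * (b * a) := by group
    _ = (a * b) * (X * a) * (b * a) := by rw [hc]
    _ = (a * b * X) * (a * b * a) := by group
    _ = (a * b * X) * (b * a * b) := by rw [hb]
    _ = (a * (b * X * b) * a) * b := by group

lemma commute_C_aux {n : ℕ} (d : ℕ) : ∀ k i, i < k → n - 1 - i ≤ d →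
    Commute (braidGen n k) (jm n i) := by
  induction d with
  | zero =>
    intro k i h hd
    rw [jm_eq_one (by omega)]; exact Commute.one_right _
  | succ d ih =>
    intro k i h hd
    rcases le_or_gt (n - 1) i with hi' | hi
    · rw [jm_eq_one hi']; exact Commute.one_right _
    rw [jm_succ hi]
    rcases Nat.lt_or_ge (i+1) k with hk | hk
    · have c1 : Commute (braidGen n k) (braidGen n i) := (braid_rel2 i k (by omega)).symm
      have c2 : Commute (braidGen n k) (jm n (i+1)) := ih k (i+1) hk (by omega)
      exact (c1.mul_right c2).mul_right c1
    · have hk' : k = i + 1 := by omega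
      subst hk'
      rcases le_or_gt (n - 1) (i+1) with h1 | h1
      · rw [braidGen_eq_one h1]; exact Commute.one_left _
      · rw [jm_succ h1]
        have hb := braid_rel1 (n := n) i (by omega)
        have hc : braidGen n i * jm n (i+2) = jm n (i+2) * braidGen n i :=
          commute_far i (i+2) (by omega)
        exact key_aux (braidGen n i) (braidGen n (i+1)) (jm n (i+2)) hb hc

lemma commute_C {n : ℕ} (k i : ℕ) (h : i < k) :
    Commute (braidGen n k) (jm n i) :=
  commute_C_aux (n - 1 - i) k i h le_rfl

lemma commute_jm {n : ℕ} (i j : ℕ) (h : i < j) : Commute (jm n i) (jm n j) := by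
  unfold jm
  have hmem : ∀ x ∈ (List.range' j (n - 1 - j)).map (braidGen n),
      Commute (jm n i) x := by
    intro x hx
    rcases List.mem_map.mp hx with ⟨l, hl, rfl⟩
    have := (List.mem_range'_1.mp hl).1
    exact (commute_C l i (by omega)).symm
  have hmem' : ∀ x ∈ (List.range' j (n - 1 - j)).reverse.map (braidGen n),
      Commute (jm n i) x := by
    intro x hx
    rcases List.mem_map.mp hx with ⟨l, hl, rfl⟩
    have := (List.mem_range'_1.mp (List.mem_reverse.mp hl)).1
    exact (commute_C l i (by omega)).symm
  exact (Commute.list_prod_right _ _ hmem).mul_right (Commute.list_prod_right _ _ hmem')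

theorem jucys_murphy_elements_commute (n i j : ℕ) (hi : i < n - 1) (hj : j < n - 1) :
    jm n i * jm n j = jm n j * jm n i := by
  rcases lt_trichotomy i j with h | h | h
  · exact commute_jm i j h
  · subst h; rfl
  · exact (commute_jm j i h).symm
end

section
/- In the braid group Br_n on n strands, presented with generators σ₁, …, σ_{n−1} and the Artin relations, the full twist equals the product of the Jucys–Murphy elements: (σ₁ σ₂ ⋯ σ_{n−1})ⁿ = δ₁ δ₂ ⋯ δ_{n−1}, where δᵢ := σᵢ σᵢ₊₁ ⋯ σ_{n−2} σ_{n−1}² σ_{n−2} ⋯ σᵢ₊₁ σᵢ. -/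
namespace BraidAux

lemma rel_one {n : ℕ} {r : FreeGroup (Fin (n - 1))} (h : r ∈ braidRels n) :
    PresentedGroup.mk (braidRels n) r = 1 := by
  have : r ∈ Subgroup.normalClosure (braidRels n) := Subgroup.subset_normalClosure h
  exact (QuotientGroup.eq_one_iff r).mpr this

lemma braid_rel {n : ℕ} {i : ℕ} (h : i + 1 < n - 1) :
    braidGen n i * braidGen n (i + 1) * braidGen n i
      = braidGen n (i + 1) * braidGen n i * braidGen n (i + 1) := by
  have hi : i < n - 1 := by omega
  set a : Fin (n - 1) := ⟨i, hi⟩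
  set b : Fin (n - 1) := ⟨i + 1, h⟩
  have hmem : (FreeGroup.of a * FreeGroup.of b * FreeGroup.of a *
      (FreeGroup.of b * FreeGroup.of a * FreeGroup.of b)⁻¹) ∈ braidRels n :=
    Or.inl ⟨a, b, rfl, rfl⟩
  have h1 := rel_one hmem
  simp only [map_mul, map_inv] at h1
  have h2 : (PresentedGroup.mk (braidRels n) (FreeGroup.of a) *
      PresentedGroup.mk (braidRels n) (FreeGroup.of b) *
      PresentedGroup.mk (braidRels n) (FreeGroup.of a))
      = (PresentedGroup.mk (braidRels n) (FreeGroup.of b) *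
      PresentedGroup.mk (braidRels n) (FreeGroup.of a) *
      PresentedGroup.mk (braidRels n) (FreeGroup.of b)) :=
    mul_inv_eq_one.mp h1
  simpa [braidGen, dif_pos hi, dif_pos h, PresentedGroup.of, a, b] using h2

lemma comm_rel {n : ℕ} {i j : ℕ} (h : i + 1 < j) :
    braidGen n i * braidGen n j = braidGen n j * braidGen n i := by
  by_cases hj : j < n - 1
  · have hi : i < n - 1 := by omega
    set a : Fin (n - 1) := ⟨i, hi⟩
    set b : Fin (n - 1) := ⟨j, hj⟩
    have hmem : (FreeGroup.of a * FreeGroup.of b *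
        (FreeGroup.of b * FreeGroup.of a)⁻¹) ∈ braidRels n :=
      Or.inr ⟨a, b, h, rfl⟩
    have h1 := rel_one hmem
    simp only [map_mul, map_inv] at h1
    have h2 := mul_inv_eq_one.mp h1
    simpa [braidGen, dif_pos hi, dif_pos hj, PresentedGroup.of, a, b] using h2
  · simp [braidGen, dif_neg hj]

lemma comm_list {n : ℕ} {i : ℕ} {l : List ℕ}
    (h : ∀ j ∈ l, braidGen n i * braidGen n j = braidGen n j * braidGen n i) :
    braidGen n i * (l.map (braidGen n)).prod = (l.map (braidGen n)).prod * braidGen n i := by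
  induction l with
  | nil => simp
  | cons a t ih =>
      simp only [List.map_cons, List.prod_cons]
      rw [← mul_assoc, h a (by simp), mul_assoc,
        ih (fun j hj => h j (by simp [hj])), ← mul_assoc]

/-- `Lp n k = σ_k σ_{k+1} ⋯ σ_{n-2}`. -/
def Lp (n k : ℕ) : BraidGroup n := ((List.range' k (n - 1 - k)).map (braidGen n)).prod

lemma swap_aux {G : Type*} [Group G] (A B x y : G) (hA : A * y = y * A)
    (hB : B * x = x * B) (hbr : x * y * x = y * x * y) :
    (A * (x * (y * B))) * x = y * (A * (x * (y * B))) := by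
  have hbr' : ∀ z : G, x * (y * (x * z)) = y * (x * (y * z)) := fun z => by
    rw [← mul_assoc, ← mul_assoc, hbr, mul_assoc, mul_assoc]
  calc (A * (x * (y * B))) * x = A * (x * (y * (B * x))) := by
        simp [mul_assoc]
    _ = A * (x * (y * (x * B))) := by rw [hB]
    _ = A * (y * (x * (y * B))) := by rw [hbr']
    _ = y * (A * (x * (y * B))) := by rw [← mul_assoc, hA, mul_assoc]

lemma Lp_swap {n k j : ℕ} (hkj : k ≤ j) (hj : j + 1 < n - 1) :
    Lp n k * braidGen n j = braidGen n (j + 1) * Lp n k := by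
  have hsplit : List.range' k (n - 1 - k)
      = List.range' k (j - k) ++ (j :: (j + 1) :: List.range' (j + 2) (n - 1 - (j + 2))) := by
    have h1 : List.range' k (j - k) ++ List.range' j (n - 1 - j)
        = List.range' k (n - 1 - k) := by
      have h : List.range' k (j - k) ++ List.range' (k + (j - k)) (n - 1 - j)
          = List.range' k (j - k + (n - 1 - j)) := List.range'_append_1
      rw [show k + (j - k) = j by omega, show j - k + (n - 1 - j) = n - 1 - k by omega] at h
      exact h
    have h2 : List.range' j (n - 1 - j)
        = j :: (j + 1) :: List.range' (j + 2) (n - 1 - (j + 2)) := by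
      have h3 : n - 1 - j = (n - 1 - (j + 2)) + 1 + 1 := by omega
      rw [h3, List.range'_succ, List.range'_succ]
    rw [← h1, h2]
  set A := (List.range' k (j - k)).map (braidGen n) with hAdef
  set B := (List.range' (j + 2) (n - 1 - (j + 2))).map (braidGen n) with hBdef
  have hL : Lp n k = A.prod * (braidGen n j * (braidGen n (j + 1) * B.prod)) := by
    rw [Lp, hsplit]
    simp [List.prod_append, mul_assoc]
    rfl
  have hA : A.prod * braidGen n (j + 1) = braidGen n (j + 1) * A.prod := by
    refine (comm_list (fun a ha => ?_)).symm
    simp only [List.mem_range'_1] at ha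
    exact (comm_rel (by omega)).symm
  have hB : B.prod * braidGen n j = braidGen n j * B.prod := by
    refine (comm_list (fun b hb => ?_)).symm
    simp only [List.mem_range'_1] at hb
    exact comm_rel (by omega)
  rw [hL]
  exact swap_aux A.prod B.prod (braidGen n j) (braidGen n (j + 1)) hA hB (braid_rel hj)

lemma Lp_pull {n k : ℕ} : ∀ t j, k ≤ j → j + t < n - 1 →
    (Lp n k) ^ t * braidGen n j = braidGen n (j + t) * (Lp n k) ^ t := by
  intro t
  induction t with
  | zero => intro j _ _; simp
  | succ t ih =>
      intro j hkj hjt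
      have h1 : Lp n k * braidGen n j = braidGen n (j + 1) * Lp n k :=
        Lp_swap hkj (by omega)
      calc (Lp n k) ^ (t + 1) * braidGen n j
          = (Lp n k) ^ t * (Lp n k * braidGen n j) := by
            rw [pow_succ, mul_assoc]
        _ = ((Lp n k) ^ t * braidGen n (j + 1)) * Lp n k := by
            rw [h1, ← mul_assoc]
        _ = braidGen n (j + 1 + t) * (Lp n k) ^ t * Lp n k := by
            rw [ih (j + 1) (by omega) (by omega)]
        _ = braidGen n (j + (t + 1)) * (Lp n k) ^ (t + 1) := by
            rw [mul_assoc, ← pow_succ]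
            congr 2
            omega

lemma Lp_cons {n k : ℕ} (hk : k < n - 1) :
    Lp n k = braidGen n k * Lp n (k + 1) := by
  rw [Lp, Lp]
  have h : n - 1 - k = (n - 1 - (k + 1)) + 1 := by omega
  rw [h, List.range'_succ]
  simp

lemma key {n k m : ℕ} (hm : k + m = n - 1) : ∀ s, s ≤ m →
    (Lp n k) ^ m = ((List.range' (k + (m - s)) s).reverse.map (braidGen n)).prod *
      ((Lp n k) ^ (m - s) * (Lp n (k + 1)) ^ s) := by
  intro s
  induction s with
  | zero => intro _; simp
  | succ s ih =>
      intro hs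
      have hts : m - s = (m - (s + 1)) + 1 := by omega
      set t := m - (s + 1) with htdef
      have hexp : (Lp n k) ^ (m - s) = braidGen n (k + t) * ((Lp n k) ^ t * Lp n (k + 1)) := by
        rw [hts, pow_succ]
        nth_rewrite 2 [Lp_cons (show k < n - 1 by omega)]
        rw [← mul_assoc, Lp_pull t k (le_refl k) (by omega), mul_assoc]
      have hD : ((List.range' (k + t) (s + 1)).reverse.map (braidGen n)).prod
          = ((List.range' (k + (m - s)) s).reverse.map (braidGen n)).prod * braidGen n (k + t) := by
        have h1 : List.range' (k + t) (s + 1) = (k + t) :: List.range' (k + t + 1) s :=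
          List.range'_succ
        have h2 : k + t + 1 = k + (m - s) := by omega
        rw [h1, h2]
        simp
      rw [ih (by omega), hexp, hD]
      rw [pow_succ']
      simp [mul_assoc]

lemma key' {n k m : ℕ} (hm : k + m = n - 1) :
    (Lp n k) ^ m = ((List.range' k m).reverse.map (braidGen n)).prod * (Lp n (k + 1)) ^ m := by
  have h := key hm m (le_refl m)
  simpa using h

lemma main {n : ℕ} : ∀ m k, k + m = n - 1 →
    (Lp n k) ^ (m + 1) = ((List.range' k m).map (jm n)).prod := by
  intro m
  induction m with
  | zero =>
      intro k hk
      have : n - 1 - k = 0 := by omega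
      simp [Lp, this]
  | succ m ih =>
      intro k hk
      have hjm : jm n k = Lp n k * ((List.range' k (m + 1)).reverse.map (braidGen n)).prod := by
        rw [jm, Lp, show n - 1 - k = m + 1 by omega]
      calc (Lp n k) ^ (m + 1 + 1)
          = Lp n k * (Lp n k) ^ (m + 1) := by rw [pow_succ']
        _ = Lp n k * (((List.range' k (m + 1)).reverse.map (braidGen n)).prod *
              (Lp n (k + 1)) ^ (m + 1)) := by rw [key' hk]
        _ = jm n k * (Lp n (k + 1)) ^ (m + 1) := by rw [hjm, mul_assoc]
        _ = jm n k * ((List.range' (k + 1) m).map (jm n)).prod := by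
            rw [ih (k + 1) (by omega)]
        _ = ((List.range' k (m + 1)).map (jm n)).prod := by
            rw [List.range'_succ]
            simp

end BraidAux

theorem full_twist_eq_product_of_jucys_murphy (n : ℕ) :
    (((List.range (n - 1)).map (braidGen n)).prod) ^ n
      = ((List.range (n - 1)).map (jm n)).prod := by
  rcases Nat.eq_zero_or_pos n with h0 | h0
  · subst h0; simp
  · have h : (n - 1) + 1 = n := by omega
    have := BraidAux.main (n := n) (n - 1) 0 (by omega)
    rw [h] at this
    rw [List.range_eq_range']
    simpa [BraidAux.Lp] using this
end

section
/- In the affine braid group Br_n^aff, presented with generators σ₁, …, σ_{n−1}, Δₙ and relations (a) σ_{n−1} Δₙ σ_{n−1} Δₙ = Δₙ σ_{n−1} Δₙ σ_{n−1}, (b) σᵢ Δₙ = Δₙ σᵢ for i < n−1, (c) σᵢσᵢ₊₁σᵢ = σᵢ₊₁σᵢσᵢ₊₁ for 1 ≤ i ≤ n−2, and (d) σᵢσⱼ = σⱼσᵢ for |i−j| > 1, the Bernstein–Lusztig elements Δᵢ := σᵢ ⋯ σ_{n−2} σ_{n−1} Δₙ σ_{n−1} σ_{n−2} ⋯ σᵢ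 (for 1 ≤ i ≤ n−1, together with Δₙ itself) pairwise commute: Δᵢ Δⱼ = Δⱼ Δᵢ for all 1 ≤ i, j ≤ n. -/
/-- Free-group generator corresponding to `σᵢ` (0-indexed). -/
def affS (n : ℕ) (i : Fin (n - 1)) : FreeGroup (Fin (n - 1) ⊕ Unit) :=
  FreeGroup.of (Sum.inl i)

/-- Free-group generator corresponding to the flag-pole generator `Δₙ`. -/
def affD (n : ℕ) : FreeGroup (Fin (n - 1) ⊕ Unit) :=
  FreeGroup.of (Sum.inr ())

/-- The relations of the affine braid group on `n` strands, with `0`-indexed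
generators `σ₀, …, σ_{n-2}` (the usual `σ₁, …, σ_{n-1}`) and `Δₙ`:
(a) `σ_{n-1} Δₙ σ_{n-1} Δₙ = Δₙ σ_{n-1} Δₙ σ_{n-1}`,
(b) `σᵢ Δₙ = Δₙ σᵢ` for `i < n - 1`,
(c) `σᵢσᵢ₊₁σᵢ = σᵢ₊₁σᵢσᵢ₊₁`,
(d) `σᵢσⱼ = σⱼσᵢ` for `|i - j| > 1`. -/
def affineBraidRels (n : ℕ) : Set (FreeGroup (Fin (n - 1) ⊕ Unit)) :=
  {r | (∃ i j : Fin (n - 1), (i : ℕ) + 1 = (j : ℕ) ∧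
          r = affS n i * affS n j * affS n i * (affS n j * affS n i * affS n j)⁻¹) ∨
       (∃ i j : Fin (n - 1), (i : ℕ) + 1 < (j : ℕ) ∧
          r = affS n i * affS n j * (affS n j * affS n i)⁻¹) ∨
       (∃ i : Fin (n - 1), (i : ℕ) = n - 2 ∧
          r = affS n i * affD n * affS n i * affD n *
              (affD n * affS n i * affD n * affS n i)⁻¹) ∨
       (∃ i : Fin (n - 1), (i : ℕ) < n - 2 ∧
          r = affS n i * affD n * (affD n * affS n i)⁻¹)}

/-- The affine braid group on `n` strands as a presented group. -/
abbrev AffineBraidGroup (n : ℕ) : Type := PresentedGroup (affineBraidRels n)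

/-- The generator `σ` (0-indexed); junk value `1` when `k ≥ n - 1`. -/
def affineBraidGen (n k : ℕ) : AffineBraidGroup n :=
  if h : k < n - 1 then PresentedGroup.of (Sum.inl (⟨k, h⟩ : Fin (n - 1))) else 1

/-- The flag-pole generator `Δₙ` of the affine braid group. -/
def affineDelta (n : ℕ) : AffineBraidGroup n :=
  PresentedGroup.of (Sum.inr ())

/-- The Bernstein–Lusztig element `Δᵢ = σᵢ ⋯ σ_{n-2} σ_{n-1} Δₙ σ_{n-1} σ_{n-2} ⋯ σᵢ`
(0-indexed: `bl n i = σᵢ ⋯ σ_{n-2} ⋅ Δₙ ⋅ σ_{n-2} ⋯ σᵢ`; in particular `bl n (n-1) = Δₙ`). -/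
def bl (n i : ℕ) : AffineBraidGroup n :=
  ((List.range' i (n - 1 - i)).map (affineBraidGen n)).prod * affineDelta n *
    ((List.range' i (n - 1 - i)).reverse.map (affineBraidGen n)).prod

namespace BLAux

lemma rel_holds {n : ℕ} {r : FreeGroup (Fin (n - 1) ⊕ Unit)} (h : r ∈ affineBraidRels n) :
    PresentedGroup.mk (affineBraidRels n) r = 1 := by
  change (QuotientGroup.mk r : AffineBraidGroup n) = 1
  rw [QuotientGroup.eq_one_iff]
  exact Subgroup.subset_normalClosure h

lemma rel_eq {n : ℕ} {x y : FreeGroup (Fin (n - 1) ⊕ Unit)}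
    (h : x * y⁻¹ ∈ affineBraidRels n) :
    PresentedGroup.mk (affineBraidRels n) x = PresentedGroup.mk (affineBraidRels n) y := by
  have := rel_holds h
  rw [map_mul, map_inv, mul_inv_eq_one] at this
  exact this

lemma gen_eq {n k : ℕ} (h : k < n - 1) :
    affineBraidGen n k = PresentedGroup.mk (affineBraidRels n) (affS n ⟨k, h⟩) := by
  simp [affineBraidGen, h, affS, PresentedGroup.of]

lemma delta_eq (n : ℕ) :
    affineDelta n = PresentedGroup.mk (affineBraidRels n) (affD n) := rfl

lemma gen_braid {n i : ℕ} (h : i + 1 < n - 1) :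
    affineBraidGen n i * affineBraidGen n (i + 1) * affineBraidGen n i
      = affineBraidGen n (i + 1) * affineBraidGen n i * affineBraidGen n (i + 1) := by
  have hi : i < n - 1 := Nat.lt_of_succ_lt h
  rw [gen_eq hi, gen_eq h, ← map_mul, ← map_mul, ← map_mul, ← map_mul]
  apply rel_eq
  exact Or.inl ⟨⟨i, hi⟩, ⟨i + 1, h⟩, rfl, by group⟩

lemma gen_comm {n i j : ℕ} (h : i + 1 < j) :
    Commute (affineBraidGen n i) (affineBraidGen n j) := by
  by_cases hj : j < n - 1
  · have hi : i < n - 1 := lt_trans (lt_trans (Nat.lt_succ_self i) h) hj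
    unfold Commute SemiconjBy
    rw [gen_eq hi, gen_eq hj, ← map_mul, ← map_mul]
    apply rel_eq
    exact Or.inr (Or.inl ⟨⟨i, hi⟩, ⟨j, hj⟩, h, by group⟩)
  · simp [affineBraidGen, hj]

lemma delta_comm {n i : ℕ} (h : i < n - 2) :
    Commute (affineBraidGen n i) (affineDelta n) := by
  have hi : i < n - 1 := lt_of_lt_of_le h (Nat.sub_le_sub_left (by norm_num) n)
  unfold Commute SemiconjBy
  rw [gen_eq hi, delta_eq, ← map_mul, ← map_mul]
  apply rel_eq
  exact Or.inr (Or.inr (Or.inr ⟨⟨i, hi⟩, h, by group⟩))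

lemma delta_braid {n : ℕ} (h : 2 ≤ n) :
    affineBraidGen n (n - 2) * affineDelta n * affineBraidGen n (n - 2) * affineDelta n
      = affineDelta n * affineBraidGen n (n - 2) * affineDelta n * affineBraidGen n (n - 2) := by
  have hi : n - 2 < n - 1 := by omega
  rw [gen_eq hi, delta_eq]
  rw [← map_mul, ← map_mul, ← map_mul, ← map_mul, ← map_mul, ← map_mul]
  apply rel_eq
  exact Or.inr (Or.inr (Or.inl ⟨⟨n - 2, hi⟩, rfl, by group⟩))

lemma bl_of_ge {n i : ℕ} (h : n - 1 ≤ i) : bl n i = affineDelta n := by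
  have : n - 1 - i = 0 := by omega
  simp [bl, this]

lemma bl_succ {n i : ℕ} (h : i < n - 1) :
    bl n i = affineBraidGen n i * bl n (i + 1) * affineBraidGen n i := by
  have h1 : n - 1 - i = (n - 1 - (i + 1)) + 1 := by omega
  rw [bl, bl, h1, List.range'_succ]
  simp only [List.map_cons, List.prod_cons, List.reverse_cons, List.map_append,
    List.prod_append, List.map_nil, List.prod_nil, List.prod_cons]
  group

lemma gen_comm_bl {n k i : ℕ} (h1 : k < n - 2) (h2 : k + 1 < i) :
    Commute (affineBraidGen n k) (bl n i) := by
  have hlist : ∀ l : List ℕ, (∀ m ∈ l, k + 1 < m) →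
      Commute (affineBraidGen n k) ((l.map (affineBraidGen n)).prod) := by
    intro l hl
    apply Commute.list_prod_right
    intro x hx
    rw [List.mem_map] at hx
    obtain ⟨m, hm, rfl⟩ := hx
    exact gen_comm (hl m hm)
  have hmem : ∀ m ∈ List.range' i (n - 1 - i), k + 1 < m := by
    intro m hm
    rw [List.mem_range'_1] at hm
    omega
  refine Commute.mul_right (Commute.mul_right ?_ (delta_comm h1)) ?_
  · exact hlist _ hmem
  · refine hlist _ ?_
    intro m hm
    exact hmem m (List.mem_reverse.mp hm)

lemma aux {G : Type*} [Group G] (a b D : G)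
    (h1 : a * b * a = b * a * b) (h2 : a * D = D * a)
    (h3 : b * D * b * D = D * (b * D * b)) :
    a * (b * D * b) * a * (b * D * b) = b * D * b * (a * (b * D * b) * a) := by
  have h1' : ∀ x : G, a * (b * (a * x)) = b * (a * (b * x)) := fun x => by
    simp only [← mul_assoc, h1]
  have h2' : ∀ x : G, a * (D * x) = D * (a * x) := fun x => by
    simp only [← mul_assoc, h2]
  have h3' : ∀ x : G, b * (D * (b * (D * x))) = D * (b * (D * (b * x))) := fun x => by
    simp only [← mul_assoc]
    rw [h3]
    simp only [mul_assoc]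
  have h1t : a * (b * a) = b * (a * b) := by
    simp only [← mul_assoc]
    exact h1
  have L : a * (b * D * b) * a * (b * D * b)
      = b * (a * (D * (b * (D * (a * (b * a)))))) := by
    simp only [mul_assoc]
    rw [← h1' (D * b), ← h2' (b * (a * (D * b))), h2' b,
      h1' (D * (b * (D * (a * b)))), h3' (a * b), ← h1t]
  have R : b * D * b * (a * (b * D * b) * a)
      = b * (a * (D * (b * (D * (a * (b * a)))))) := by
    simp only [mul_assoc]
    rw [← h1' (D * (b * a)), ← h2' (b * (a * (D * (b * a)))), h2' (b * a)]
  rw [L, R]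

lemma comm_le (n : ℕ) : ∀ d i j : ℕ, n - 1 - i ≤ d → i ≤ j → j ≤ n - 1 →
    Commute (bl n i) (bl n j) := by
  intro d
  induction d with
  | zero =>
    intro i j hd hij hjn
    rw [bl_of_ge (by omega : n - 1 ≤ i), bl_of_ge (by omega : n - 1 ≤ j)]
  | succ d ih =>
    intro i j hd hij hjn
    rcases Nat.lt_or_ge i (n - 1) with h | h
    swap
    · rw [bl_of_ge h, bl_of_ge (le_trans h hij)]
    rcases Nat.lt_or_ge (i + 1) j with hj | hj
    · -- non-adjacent case
      have hin2 : i < n - 2 := by omega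
      have ca : Commute (affineBraidGen n i) (bl n j) := gen_comm_bl hin2 hj
      have cX : Commute (bl n (i + 1)) (bl n j) := ih (i + 1) j (by omega) (by omega) hjn
      rw [bl_succ h]
      exact (ca.mul_left cX).mul_left ca
    rcases Nat.eq_or_lt_of_le hij with rfl | hlt
    · exact Commute.refl _
    have hji : j = i + 1 := by omega
    subst hji
    rcases Nat.lt_or_ge (i + 1) (n - 1) with h2 | h2
    · -- adjacent case, generic
      have hbr := gen_braid (n := n) h2
      have hD : Commute (affineBraidGen n i) (bl n (i + 2)) := gen_comm_bl (by omega) (by omega)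
      have hX : Commute (bl n (i + 1)) (bl n (i + 2)) :=
        ih (i + 1) (i + 2) (by omega) (by omega) (by omega)
      have hX' := hX.eq
      rw [bl_succ h2] at hX'
      unfold Commute SemiconjBy
      rw [bl_succ h, bl_succ h2]
      exact aux _ _ _ hbr hD.eq hX'
    · -- adjacent case at the top
      have hi2 : i = n - 2 := by omega
      unfold Commute SemiconjBy
      rw [bl_succ h, bl_of_ge (by omega : n - 1 ≤ i + 1)]
      subst hi2
      have hdb := delta_braid (n := n) (by omega)
      simp only [← mul_assoc] at hdb ⊢
      exact hdb

end BLAux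

theorem bernstein_lusztig_elements_commute (n i j : ℕ) (hi : i < n) (hj : j < n) :
    bl n i * bl n j = bl n j * bl n i := by
  rcases le_total i j with h | h
  · exact (BLAux.comm_le n n i j (by omega) h (by omega)).eq
  · exact ((BLAux.comm_le n n j i (by omega) h (by omega)).symm).eq
end
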